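/- In the Equal-cardinality-Partition-reduction instance, every AEF-1 allocation in which each agent receives exactly k+2 items gives each agent at most two of the five zero-valued items of M₃; consequently two agents receive exactly two zero-valued items each and one agent receives exactly one zero-valued item. -/

import Mathlib

open Finset

/-- Average value of a bundle: total value divided by cardinality; `0` for the empty bundle. -/
noncomputable def avgVal {G : Type*} (v : G → ℝ) (S : Finset G) : ℝ :=
  (∑ g ∈ S, v g) / (S.card : ℝ)

/-- The item type of the Equal-cardinality-Partition-reduction instance:
`2k` items of `M₁`, `k+1` items of `M₂`, and five zero-valued items of `M₃`. -/
abbrev ECP (k : ℕ) := Fin (2 * k) ⊕ (Fin (k + 1) ⊕ Fin 5)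

/-- The identical valuation of the Equal-cardinality-Partition-reduction instance:
`v(g_j) = x_j + k²T²`, each item of `M₂` has value `(k+2)T'/(k+1)²` where
`T' = T + k³T²`, and the items of `M₃` have value `0`. -/
noncomputable def ecpVal (k T : ℕ) (x : Fin (2 * k) → ℕ) : ECP k → ℝ
  | Sum.inl j => (x j : ℝ) + (k : ℝ) ^ 2 * (T : ℝ) ^ 2
  | Sum.inr (Sum.inl _) =>
      ((k : ℝ) + 2) * ((T : ℝ) + (k : ℝ) ^ 3 * (T : ℝ) ^ 2) / ((k : ℝ) + 1) ^ 2
  | Sum.inr (Sum.inr _) => 0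

/-- The five zero-valued items of `M₃`, as a subset of all items. -/
def zeroItems (k : ℕ) : Finset (ECP k) :=
  Finset.univ.image (fun z : Fin 5 => Sum.inr (Sum.inr z))

/-- The `k+1` items of `M₂`, as a subset of all items. -/
def midItems (k : ℕ) : Finset (ECP k) :=
  Finset.univ.image (fun b : Fin (k + 1) => Sum.inr (Sum.inl b))

/-- `A` is an allocation among three agents: pairwise disjoint bundles covering all items. -/
def IsAlloc3 (k : ℕ) (A : Fin 3 → Finset (ECP k)) : Prop :=
  (∀ i j : Fin 3, i ≠ j → Disjoint (A i) (A j)) ∧ Finset.univ.biUnion A = Finset.univ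

/-- AEF-1 for three agents with the identical valuation `v`: for every pair of agents
there is an item in the union of the two bundles whose removal eliminates the envy. -/
def AEF1id (k : ℕ) (v : ECP k → ℝ) (A : Fin 3 → Finset (ECP k)) : Prop :=
  ∀ i h : Fin 3,
    ∃ g ∈ A i ∪ A h, avgVal v ((A h).erase g) ≤ avgVal v ((A i).erase g)

lemma zeroItems_card (k : ℕ) : (zeroItems k).card = 5 := by
  have hinj : Function.Injective (fun z : Fin 5 => (Sum.inr (Sum.inr z) : ECP k)) := by
    intro a b h
    simpa using h
  rw [zeroItems, Finset.card_image_of_injective _ hinj]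
  simp

lemma ecp_zero_count_sum (k : ℕ) (A : Fin 3 → Finset (ECP k)) (hA : IsAlloc3 k A) :
    (A 0 ∩ zeroItems k).card + (A 1 ∩ zeroItems k).card + (A 2 ∩ zeroItems k).card = 5 := by
  have hZ : zeroItems k = Finset.univ.biUnion (fun i => A i ∩ zeroItems k) := by
    ext g
    simp only [mem_biUnion, mem_inter, mem_univ, true_and]
    constructor
    · intro hg
      have : g ∈ Finset.univ.biUnion A := by rw [hA.2]; exact mem_univ g
      obtain ⟨i, _, hi⟩ := mem_biUnion.1 this
      exact ⟨i, hi, hg⟩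
    · rintro ⟨i, _, hg⟩; exact hg
  have hcard : (zeroItems k).card = ∑ i : Fin 3, (A i ∩ zeroItems k).card := by
    conv_lhs => rw [hZ]
    apply Finset.card_biUnion
    intro i _ j _ hij
    exact (hA.1 i j hij).mono inter_subset_left inter_subset_left
  have h5 := zeroItems_card k
  rw [hcard, Fin.sum_univ_three] at h5
  omega

lemma ecp_zero_le_two (k T : ℕ) (hk : 4 ≤ k) (hT : 4 ≤ T)
    (x : Fin (2 * k) → ℕ) (hsum : ∑ j, x j = 2 * T)
    (A : Fin 3 → Finset (ECP k)) (hA : IsAlloc3 k A)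
    (hAEF1 : AEF1id k (ecpVal k T x) A)
    (hquota : ∀ i, (A i).card = k + 2) :
    ∀ i, (A i ∩ zeroItems k).card ≤ 2 := by
  set v := ecpVal k T x with hv
  have hK : (4:ℝ) ≤ (k:ℝ) := by exact_mod_cast hk
  have hTr : (4:ℝ) ≤ (T:ℝ) := by exact_mod_cast hT
  have hK0 : (0:ℝ) ≤ (k:ℝ) := by linarith
  have hTr0 : (0:ℝ) ≤ (T:ℝ) := by linarith
  set Mv : ℝ := (k:ℝ)^2*(T:ℝ)^2 + 2*(T:ℝ) with hMvdef
  set m : ℝ := ((k:ℝ)+2)*((T:ℝ) + (k:ℝ)^3*(T:ℝ)^2)/((k:ℝ)+1)^2 with hmdef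
  have hm0 : 0 ≤ m := by rw [hmdef]; positivity
  have hMv0 : 0 ≤ Mv := by rw [hMvdef]; positivity
  have hv0 : ∀ g, 0 ≤ v g := by
    rintro (j | b | z)
    · show (0:ℝ) ≤ (x j : ℝ) + (k:ℝ)^2*(T:ℝ)^2
      positivity
    · show (0:ℝ) ≤ ((k:ℝ)+2)*((T:ℝ) + (k:ℝ)^3*(T:ℝ)^2)/((k:ℝ)+1)^2
      positivity
    · exact le_refl 0
  have hxle : ∀ j, (x j : ℝ) ≤ 2*(T:ℝ) := by
    intro j
    have h1 : x j ≤ 2*T := hsum ▸ Finset.single_le_sum (fun i _ => Nat.zero_le _) (mem_univ j)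
    calc (x j : ℝ) ≤ ((2*T : ℕ) : ℝ) := by exact_mod_cast h1
      _ = 2*(T:ℝ) := by push_cast; ring
  have hKsq : 4*(k:ℝ)^2 ≤ (k:ℝ)^2*(T:ℝ) :=
    by nlinarith [mul_nonneg (sq_nonneg (k:ℝ)) (by linarith : (0:ℝ) ≤ (T:ℝ) - 4)]
  have hKlin : (k:ℝ) + 2 ≤ 4*(k:ℝ)^2 := by nlinarith [sq_nonneg ((k:ℝ) - 4)]
  have hmMv : m ≤ (k:ℝ)^2*(T:ℝ)^2 := by
    rw [hmdef, div_le_iff₀ (by positivity)]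
    have hfac : (0:ℝ) ≤ (T:ℝ) * ((k:ℝ)^2*(T:ℝ) - (k:ℝ) - 2) :=
      mul_nonneg hTr0 (by linarith)
    nlinarith [hfac]
  have hvM : ∀ g, v g ≤ Mv := by
    rintro (j | b | z)
    · show (x j : ℝ) + (k:ℝ)^2*(T:ℝ)^2 ≤ Mv
      have := hxle j
      rw [hMvdef]; linarith
    · show m ≤ Mv
      rw [hMvdef]; linarith [hmMv]
    · exact hMv0
  have hmem : ∀ g : ECP k, g ∈ zeroItems k ↔ ∃ z : Fin 5, Sum.inr (Sum.inr z) = g := by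
    intro g; rw [zeroItems]; simp
  have hvm : ∀ g, g ∉ zeroItems k → m ≤ v g := by
    rintro (j | b | z) hg
    · show m ≤ (x j : ℝ) + (k:ℝ)^2*(T:ℝ)^2
      have hx0 : (0:ℝ) ≤ (x j : ℝ) := by positivity
      linarith [hmMv]
    · exact le_refl _
    · exact absurd ((hmem _).2 ⟨z, rfl⟩) hg
  have hvz : ∀ g ∈ zeroItems k, v g = 0 := by
    intro g hg
    obtain ⟨z, rfl⟩ := (hmem g).1 hg
    rfl
  have hsumZ : ∀ S : Finset (ECP k), ∑ g ∈ S, v g = ∑ g ∈ S \ zeroItems k, v g := by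
    intro S
    refine (Finset.sum_subset sdiff_subset ?_).symm
    intro g hg hg'
    refine hvz g ?_
    simp only [mem_sdiff, hg, true_and, not_not] at hg'
    exact hg'
  -- main contradiction
  intro i
  by_contra hci
  push_neg at hci
  have hci3 : 3 ≤ (A i ∩ zeroItems k).card := hci
  have hsum5 := ecp_zero_count_sum k A hA
  obtain ⟨h, hhi, hch⟩ : ∃ h : Fin 3, h ≠ i ∧ (A h ∩ zeroItems k).card ≤ 1 := by
    fin_cases i
    · have hci0 : 3 ≤ (A 0 ∩ zeroItems k).card := hci3
      rcases (by omega : (A 1 ∩ zeroItems k).card ≤ 1 ∨ (A 2 ∩ zeroItems k).card ≤ 1) with h1 | h1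
      · exact ⟨1, by decide, h1⟩
      · exact ⟨2, by decide, h1⟩
    · have hci1 : 3 ≤ (A 1 ∩ zeroItems k).card := hci3
      rcases (by omega : (A 0 ∩ zeroItems k).card ≤ 1 ∨ (A 2 ∩ zeroItems k).card ≤ 1) with h1 | h1
      · exact ⟨0, by decide, h1⟩
      · exact ⟨2, by decide, h1⟩
    · have hci2 : 3 ≤ (A 2 ∩ zeroItems k).card := hci3
      rcases (by omega : (A 0 ∩ zeroItems k).card ≤ 1 ∨ (A 1 ∩ zeroItems k).card ≤ 1) with h1 | h1
      · exact ⟨0, by decide, h1⟩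
      · exact ⟨1, by decide, h1⟩
  obtain ⟨g, _, hle⟩ := hAEF1 i h
  set Si := (A i).erase g with hSi
  set Sh := (A h).erase g with hSh
  have hcardAiZ : (A i \ zeroItems k).card ≤ k - 1 := by
    have h1 := Finset.card_inter_add_card_sdiff (A i) (zeroItems k)
    rw [hquota i] at h1
    omega
  have hcardAhZ : k + 1 ≤ (A h \ zeroItems k).card := by
    have h1 := Finset.card_inter_add_card_sdiff (A h) (zeroItems k)
    rw [hquota h] at h1
    omega
  have hSiZ : (Si \ zeroItems k).card ≤ k - 1 := by
    refine le_trans (Finset.card_le_card ?_) hcardAiZ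
    intro a ha
    simp only [hSi, mem_sdiff, mem_erase] at ha ⊢
    exact ⟨ha.1.2, ha.2⟩
  have hShZ : k ≤ (Sh \ zeroItems k).card := by
    have heq : Sh \ zeroItems k = (A h \ zeroItems k).erase g := by
      ext a
      simp only [hSh, mem_sdiff, mem_erase]
      tauto
    rw [heq]
    have h1 := Finset.pred_card_le_card_erase (s := A h \ zeroItems k) (a := g)
    omega
  have hSicard : k + 1 ≤ Si.card := by
    have h1 := Finset.pred_card_le_card_erase (s := A i) (a := g)
    rw [hquota i] at h1
    rw [hSi]
    omega
  have hShcard_ub : Sh.card ≤ k + 2 := by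
    have h1 := Finset.card_erase_le (s := A h) (a := g)
    rw [hquota h] at h1
    exact h1
  have hShcard_pos : 0 < Sh.card := by
    have h1 := le_trans hShZ (Finset.card_le_card (sdiff_subset (s := Sh) (t := zeroItems k)))
    omega
  have hsum_i : ∑ a ∈ Si, v a ≤ ((k:ℝ) - 1) * Mv := by
    rw [hsumZ]
    calc ∑ a ∈ Si \ zeroItems k, v a ≤ (Si \ zeroItems k).card • Mv :=
          Finset.sum_le_card_nsmul _ _ _ (fun a _ => hvM a)
      _ = ((Si \ zeroItems k).card : ℝ) * Mv := nsmul_eq_mul _ _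
      _ ≤ ((k:ℝ) - 1) * Mv := by
          refine mul_le_mul_of_nonneg_right ?_ hMv0
          have h1 : ((Si \ zeroItems k).card : ℝ) ≤ ((k - 1 : ℕ) : ℝ) := by
            exact_mod_cast hSiZ
          have h2 : ((k - 1 : ℕ) : ℝ) = (k:ℝ) - 1 := by
            push_cast [Nat.cast_sub (by omega : 1 ≤ k)]; ring
          linarith
  have hsum_h : (k:ℝ) * m ≤ ∑ a ∈ Sh, v a := by
    rw [hsumZ]
    calc (k:ℝ) * m ≤ ((Sh \ zeroItems k).card : ℝ) * m := by
          refine mul_le_mul_of_nonneg_right ?_ hm0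
          exact_mod_cast hShZ
      _ = (Sh \ zeroItems k).card • m := (nsmul_eq_mul _ _).symm
      _ ≤ ∑ a ∈ Sh \ zeroItems k, v a :=
          Finset.card_nsmul_le_sum _ _ _ (fun a ha => hvm a (mem_sdiff.1 ha).2)
  have havg_i : avgVal v Si ≤ ((k:ℝ) - 1) * Mv / ((k:ℝ) + 1) := by
    refine div_le_div₀ (mul_nonneg (by linarith) hMv0) hsum_i (by linarith) ?_
    calc (k:ℝ) + 1 = ((k + 1 : ℕ) : ℝ) := by push_cast; ring
      _ ≤ (Si.card : ℝ) := by exact_mod_cast hSicard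
  have havg_h : (k:ℝ) * m / ((k:ℝ) + 2) ≤ avgVal v Sh := by
    refine div_le_div₀ (Finset.sum_nonneg (fun a _ => hv0 a)) hsum_h
      (by exact_mod_cast hShcard_pos) ?_
    calc (Sh.card : ℝ) ≤ ((k + 2 : ℕ) : ℝ) := by exact_mod_cast hShcard_ub
      _ = (k:ℝ) + 2 := by push_cast; ring
  have base : ((k:ℝ)^2 - 1) * Mv < (k:ℝ) * ((T:ℝ) + (k:ℝ)^3*(T:ℝ)^2) := by
    rw [hMvdef]
    have hb1 : (0:ℝ) ≤ (k:ℝ)^2*(T:ℝ)*((T:ℝ) - 2) :=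
      mul_nonneg (mul_nonneg (sq_nonneg _) hTr0) (by linarith)
    nlinarith [hb1, mul_nonneg hK0 hTr0]
  have hmeq : m * ((k:ℝ)+1)^2 = ((k:ℝ)+2)*((T:ℝ) + (k:ℝ)^3*(T:ℝ)^2) := by
    rw [hmdef]
    field_simp
  have key : ((k:ℝ) - 1) * Mv / ((k:ℝ) + 1) < (k:ℝ) * m / ((k:ℝ) + 2) := by
    rw [div_lt_div_iff₀ (by linarith) (by linarith)]
    have h1 : (0:ℝ) < (k:ℝ) + 1 := by linarith
    rw [← mul_lt_mul_iff_left₀ h1]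
    have b2 : (((k:ℝ)+2)) * ((((k:ℝ)^2 - 1))*Mv) < (((k:ℝ)+2)) * ((k:ℝ)*((T:ℝ) + (k:ℝ)^3*(T:ℝ)^2)) :=
      mul_lt_mul_of_pos_left base (by linarith)
    calc ((k:ℝ) - 1) * Mv * ((k:ℝ) + 2) * ((k:ℝ) + 1)
        = ((k:ℝ)+2) * (((k:ℝ)^2 - 1)*Mv) := by ring
      _ < ((k:ℝ)+2) * ((k:ℝ)*((T:ℝ) + (k:ℝ)^3*(T:ℝ)^2)) := b2
      _ = (k:ℝ) * (((k:ℝ)+2)*((T:ℝ) + (k:ℝ)^3*(T:ℝ)^2)) := by ring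
      _ = (k:ℝ) * (m * ((k:ℝ)+1)^2) := by rw [hmeq]
      _ = (k:ℝ) * m * ((k:ℝ) + 1) * ((k:ℝ) + 1) := by ring
  have hcontra : avgVal v Sh ≤ avgVal v Si := hle
  linarith

/-- In every AEF-1 allocation meeting the quota (`k+2` items per agent), each agent gets
at most two of the five zero-valued items; consequently two agents get exactly two zeros
and one agent gets exactly one zero. -/
theorem ecp_zero_distribution (k T : ℕ) (hk : 4 ≤ k) (hT : 4 ≤ T)
    (x : Fin (2 * k) → ℕ) (hsum : ∑ j, x j = 2 * T)
    (A : Fin 3 → Finset (ECP k)) (hA : IsAlloc3 k A)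
    (hAEF1 : AEF1id k (ecpVal k T x) A)
    (hquota : ∀ i, (A i).card = k + 2) :
    (∀ i, (A i ∩ zeroItems k).card ≤ 2) ∧
    (∃ i : Fin 3, (A i ∩ zeroItems k).card = 1 ∧
      ∀ j : Fin 3, j ≠ i → (A j ∩ zeroItems k).card = 2) :=  by
  have hle2 := ecp_zero_le_two k T hk hT x hsum A hA hAEF1 hquota
  refine ⟨hle2, ?_⟩
  have hsum5 := ecp_zero_count_sum k A hA
  have h0 := hle2 0
  have h1 := hle2 1
  have h2 := hle2 2
  rcases (by omega : (A 0 ∩ zeroItems k).card = 1 ∧ (A 1 ∩ zeroItems k).card = 2 ∧ (A 2 ∩ zeroItems k).card = 2 ∨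
      (A 1 ∩ zeroItems k).card = 1 ∧ (A 0 ∩ zeroItems k).card = 2 ∧ (A 2 ∩ zeroItems k).card = 2 ∨
      (A 2 ∩ zeroItems k).card = 1 ∧ (A 0 ∩ zeroItems k).card = 2 ∧ (A 1 ∩ zeroItems k).card = 2) with
    ⟨ha, hb, hc⟩ | ⟨ha, hb, hc⟩ | ⟨ha, hb, hc⟩
  · refine ⟨0, ha, ?_⟩
    intro j hj
    fin_cases j
    · exact absurd rfl hj
    · exact hb
    · exact hc
  · refine ⟨1, ha, ?_⟩
    intro j hj
    fin_cases j
    · exact hb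
    · exact absurd rfl hj
    · exact hc
  · refine ⟨2, ha, ?_⟩
    intro j hj
    fin_cases j
    · exact hb
    · exact hc
    · exact absurd rfl hj
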